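/- Let M be a monoid. (i) If M admits a robust monoid Markov language over a finite alphabet A that represents a semigroup generating set for M (i.e., φ* is surjective on nonempty words), then M admits a robust semigroup Markov language over A. (ii) If M admits a robust monoid Markov language over a finite alphabet B representing a monoid generating set for M, then M admits a robust semigroup Markov language over the alphabet B ∪ {1} obtained by adjoining one new letter 1 with φ(1) = 1_M. -/

import Mathlib

open Function

/-- A language is regular if it is accepted by a deterministic finite automaton
with a finite state set. -/
def RegularLang {A : Type} (L : Language A) : Prop :=
  ∃ (Q : Type) (_ : Fintype Q) (M : DFA A Q), M.accepts = L

/-- The product of a nonempty word under the letter-assignment `φ`; the empty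
word is sent to `none`. This is the induced map `φ⁺` on nonempty words. -/
def prodPlus {A S : Type} [Semigroup S] (φ : A → S) : List A → Option S
  | [] => none
  | a :: w => some (w.foldl (fun s b => s * φ b) (φ a))

/-- The induced monoid homomorphism `φ*` from the free monoid of words. -/
def monProd {A M : Type} [Monoid M] (φ : A → M) (w : List A) : M :=
  (w.map φ).prod

/-- A semigroup Markov language for `S` over `A` (with respect to `φ`): a regular,
`+`-prefix-closed language of nonempty words mapping bijectively onto `S` under `φ⁺`. -/
structure IsSgMarkovLang {A S : Type} [Semigroup S] (φ : A → S) (L : Language A) : Prop where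
  regular : RegularLang L
  not_empty_mem : [] ∉ L
  plus_prefix_closed : ∀ u v : List A, u ≠ [] → v ≠ [] → u ++ v ∈ L → u ∈ L
  unique_rep : ∀ s : S, ∃! w : List A, w ∈ L ∧ prodPlus φ w = some s

/-- A robust semigroup Markov language: additionally every word of `L` has minimal
length among (nonempty) words representing the same element. -/
structure IsRobustSgMarkovLang {A S : Type} [Semigroup S] (φ : A → S) (L : Language A)
    extends IsSgMarkovLang φ L : Prop where
  min_length : ∀ w ∈ L, ∀ v : List A, prodPlus φ v = prodPlus φ w → w.length ≤ v.length

/-- A monoid Markov language for `M` over `A` (with respect to `φ`): a regular,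
prefix-closed language mapping bijectively onto `M` under `φ*`. -/
structure IsMonMarkovLang {A M : Type} [Monoid M] (φ : A → M) (L : Language A) : Prop where
  regular : RegularLang L
  prefix_closed : ∀ u v : List A, u ++ v ∈ L → u ∈ L
  unique_rep : ∀ m : M, ∃! w : List A, w ∈ L ∧ monProd φ w = m

/-- A robust monoid Markov language: additionally every word of `L` has minimal
length among words representing the same element. -/
structure IsRobustMonMarkovLang {A M : Type} [Monoid M] (φ : A → M) (L : Language A)
    extends IsMonMarkovLang φ L : Prop where
  min_length : ∀ w ∈ L, ∀ v : List A, monProd φ v = monProd φ w → w.length ≤ v.length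

/-- `S` is Markov as a semigroup. -/
def SgMarkov (S : Type) [Semigroup S] : Prop :=
  ∃ (A : Type) (_ : Fintype A) (φ : A → S),
    (∀ s : S, ∃ w : List A, prodPlus φ w = some s) ∧
    ∃ L : Language A, IsSgMarkovLang φ L

/-- `S` is robustly Markov (as a semigroup) with respect to some alphabet. -/
def SgRobustlyMarkov (S : Type) [Semigroup S] : Prop :=
  ∃ (A : Type) (_ : Fintype A) (φ : A → S),
    (∀ s : S, ∃ w : List A, prodPlus φ w = some s) ∧
    ∃ L : Language A, IsRobustSgMarkovLang φ L

/-- `S` is strongly Markov (as a semigroup). -/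
def SgStronglyMarkov (S : Type) [Semigroup S] : Prop :=
  ∀ (A : Type) [Fintype A] (φ : A → S),
    (∀ s : S, ∃ w : List A, prodPlus φ w = some s) →
    ∃ L : Language A, IsRobustSgMarkovLang φ L

/-- `M` is Markov as a monoid. -/
def MonMarkov (M : Type) [Monoid M] : Prop :=
  ∃ (A : Type) (_ : Fintype A) (φ : A → M),
    Surjective (monProd φ) ∧ ∃ L : Language A, IsMonMarkovLang φ L

/-- `M` is robustly Markov (as a monoid) with respect to some alphabet. -/
def MonRobustlyMarkov (M : Type) [Monoid M] : Prop :=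
  ∃ (A : Type) (_ : Fintype A) (φ : A → M),
    Surjective (monProd φ) ∧ ∃ L : Language A, IsRobustMonMarkovLang φ L

/-- `M` is strongly Markov (as a monoid). -/
def MonStronglyMarkov (M : Type) [Monoid M] : Prop :=
  ∀ (A : Type) [Fintype A] (φ : A → M),
    Surjective (monProd φ) →
    ∃ L : Language A, IsRobustMonMarkovLang φ L

namespace Stmt3Aux

variable {A B : Type} {Q1 Q2 : Type}

def prodDFA (f : Prop → Prop → Prop) (M1 : DFA A Q1) (M2 : DFA A Q2) : DFA A (Q1 × Q2) where
  step p a := (M1.step p.1 a, M2.step p.2 a)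
  start := (M1.start, M2.start)
  accept := {p | f (p.1 ∈ M1.accept) (p.2 ∈ M2.accept)}

lemma prodDFA_evalFrom (f : Prop → Prop → Prop) (M1 : DFA A Q1) (M2 : DFA A Q2)
    (w : List A) : ∀ (q1 : Q1) (q2 : Q2),
    (prodDFA f M1 M2).evalFrom (q1, q2) w = (M1.evalFrom q1 w, M2.evalFrom q2 w) := by
  induction w with
  | nil => intro q1 q2; simp [DFA.evalFrom]
  | cons a w ih =>
    intro q1 q2
    simp only [DFA.evalFrom, List.foldl_cons] at *
    exact ih _ _

lemma regular_combo (f : Prop → Prop → Prop) {L1 L2 : Language A}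
    (h1 : RegularLang L1) (h2 : RegularLang L2) :
    RegularLang {w | f (w ∈ L1) (w ∈ L2)} := by
  obtain ⟨Q1, _, M1, rfl⟩ := h1
  obtain ⟨Q2, _, M2, rfl⟩ := h2
  refine ⟨Q1 × Q2, inferInstance, prodDFA f M1 M2, ?_⟩
  ext w
  rw [DFA.mem_accepts]
  show (prodDFA f M1 M2).evalFrom (M1.start, M2.start) w ∈ _ ↔ _
  rw [prodDFA_evalFrom]
  exact Iff.rfl

def neNilDFA (A : Type) : DFA A Bool where
  step _ _ := true
  start := false
  accept := {q | q = true}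

lemma regular_ne_nil : RegularLang {v : List A | v ≠ []} := by
  refine ⟨Bool, inferInstance, neNilDFA A, ?_⟩
  have hev : ∀ (w : List A) (q : Bool), w ≠ [] → (neNilDFA A).evalFrom q w = true := by
    intro w
    induction w with
    | nil => simp
    | cons a w ih =>
      intro q _
      show (neNilDFA A).evalFrom true w = true
      rcases eq_or_ne w [] with rfl | h
      · rfl
      · exact ih _ h
  ext w
  rw [DFA.mem_accepts]
  rcases eq_or_ne w [] with rfl | h
  · refine iff_of_false ?_ (fun hx => hx rfl)
    intro hx
    exact Bool.false_ne_true hx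
  · rw [DFA.eval, hev w _ h]
    exact iff_of_true rfl h


variable {A B Q : Type}

open Classical in
noncomputable def singDFA (w : List A) : DFA A (Fin (w.length + 2)) where
  step i a :=
    if h : (i : ℕ) < w.length then
      if w.get ⟨i, h⟩ = a then ⟨(i : ℕ) + 1, by omega⟩ else ⟨w.length + 1, by omega⟩
    else ⟨w.length + 1, by omega⟩
  start := ⟨0, by omega⟩
  accept := {⟨w.length, by omega⟩}

lemma sing_evalFrom_sink (w : List A) (u : List A) :
    (singDFA w).evalFrom ⟨w.length + 1, by omega⟩ u = ⟨w.length + 1, by omega⟩ := by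
  induction u with
  | nil => rfl
  | cons a u ih =>
    show (singDFA w).evalFrom ((singDFA w).step _ a) u = _
    have : (singDFA w).step ⟨w.length + 1, by omega⟩ a = ⟨w.length + 1, by omega⟩ := by
      simp only [singDFA]
      rw [dif_neg (by simp)]
    rw [this]; exact ih

lemma sing_evalFrom_of_prefix (w : List A) : ∀ (u : List A) (i : ℕ)
    (hi : i + u.length ≤ w.length), u <+: w.drop i →
    (singDFA w).evalFrom ⟨i, by omega⟩ u = ⟨i + u.length, by omega⟩ := by
  intro u
  induction u with
  | nil => intro i hi _; simp [DFA.evalFrom]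
  | cons a u ih =>
    intro i hi hpre
    have hi' : i < w.length := by simp at hi; omega
    have hd : w.drop i = w[i] :: w.drop (i + 1) := List.drop_eq_getElem_cons hi'
    rw [hd] at hpre
    obtain ⟨ha, hpre'⟩ := List.cons_prefix_cons.mp hpre
    show (singDFA w).evalFrom ((singDFA w).step ⟨i, by omega⟩ a) u = _
    have hstep : (singDFA w).step ⟨i, by omega⟩ a = ⟨i + 1, by omega⟩ := by
      simp only [singDFA]
      rw [dif_pos hi', if_pos (by simpa using ha.symm)]
    rw [hstep]
    have := ih (i + 1) (by simp at hi ⊢; omega) hpre'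
    rw [this]
    apply Fin.ext
    simp; omega

lemma sing_evalFrom_of_not_prefix (w : List A) : ∀ (u : List A) (i : ℕ)
    (hi : i ≤ w.length), ¬ (u <+: w.drop i) →
    (singDFA w).evalFrom ⟨i, by omega⟩ u = ⟨w.length + 1, by omega⟩ := by
  intro u
  induction u with
  | nil => intro i hi h; exact absurd (List.nil_prefix) h
  | cons a u ih =>
    intro i hi hpre
    show (singDFA w).evalFrom ((singDFA w).step ⟨i, by omega⟩ a) u = _
    by_cases hi' : i < w.length
    · have hd : w.drop i = w[i] :: w.drop (i + 1) := List.drop_eq_getElem_cons hi'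
      by_cases ha : w[i] = a
      · have hstep : (singDFA w).step ⟨i, by omega⟩ a = ⟨i + 1, by omega⟩ := by
          simp only [singDFA]
          rw [dif_pos hi', if_pos (by simpa using ha)]
        rw [hstep]
        apply ih (i + 1) (by omega)
        intro hc
        exact hpre (by rw [hd]; exact List.cons_prefix_cons.mpr ⟨ha.symm, hc⟩)
      · have hstep : (singDFA w).step ⟨i, by omega⟩ a = ⟨w.length + 1, by omega⟩ := by
          simp only [singDFA]
          rw [dif_pos hi', if_neg (by simpa using ha)]
        rw [hstep]; exact sing_evalFrom_sink w u
    · have hstep : (singDFA w).step ⟨i, by omega⟩ a = ⟨w.length + 1, by omega⟩ := by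
        simp only [singDFA]
        rw [dif_neg (by simpa using hi')]
      rw [hstep]; exact sing_evalFrom_sink w u

lemma regular_singleton (w : List A) : RegularLang {w} := by
  refine ⟨Fin (w.length + 2), inferInstance, singDFA w, ?_⟩
  ext u
  rw [DFA.mem_accepts, DFA.eval]
  have hstart : (singDFA w).start = ⟨0, by omega⟩ := rfl
  rw [hstart]
  by_cases h : u <+: w
  · by_cases hlen : u.length = w.length
    · rw [sing_evalFrom_of_prefix w u 0 (by omega) (by simpa using h)]
      refine iff_of_true ?_ ?_
      · show _ ∈ ({_} : Set _)
        rw [Set.mem_singleton_iff, Fin.mk_eq_mk]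
        omega
      · change u = w
        exact h.eq_of_length hlen
    · rw [sing_evalFrom_of_prefix w u 0 (by simpa using h.length_le) (by simpa using h)]
      refine iff_of_false ?_ ?_
      · intro hc
        simp only [singDFA, Set.mem_singleton_iff, Fin.mk_eq_mk] at hc
        omega
      · intro hc
        exact hlen (by change u = w at hc; rw [hc])
  · rw [sing_evalFrom_of_not_prefix w u 0 (by omega) (by simpa using h)]
    refine iff_of_false ?_ ?_
    · intro hc
      simp only [singDFA, Set.mem_singleton_iff, Fin.mk_eq_mk] at hc
      omega
    · intro hc
      change u = w at hc
      exact h (hc ▸ List.prefix_refl u)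

def optDFA (M : DFA B Q) : DFA (Option B) (Option Q) where
  step q a := match q, a with
    | some q, some b => some (M.step q b)
    | _, _ => none
  start := some M.start
  accept := some '' M.accept

lemma optDFA_evalFrom_none (M : DFA B Q) (v : List (Option B)) :
    (optDFA M).evalFrom none v = none := by
  induction v with
  | nil => rfl
  | cons x v ih =>
    show (optDFA M).evalFrom ((optDFA M).step none x) v = none
    have : (optDFA M).step none x = none := rfl
    rw [this]; exact ih

lemma optDFA_evalFrom_map (M : DFA B Q) (u : List B) : ∀ q : Q,
    (optDFA M).evalFrom (some q) (u.map some) = some (M.evalFrom q u) := by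
  induction u with
  | nil => intro q; rfl
  | cons b u ih =>
    intro q
    show (optDFA M).evalFrom ((optDFA M).step (some q) (some b)) (u.map some) = _
    have : (optDFA M).step (some q) (some b) = some (M.step q b) := rfl
    rw [this, ih]
    rfl

lemma optDFA_evalFrom_mem_none (M : DFA B Q) (v : List (Option B)) (hv : none ∈ v) :
    ∀ q : Q, (optDFA M).evalFrom (some q) v = none := by
  induction v with
  | nil => simp at hv
  | cons x v ih =>
    intro q
    match x with
    | none =>
      show (optDFA M).evalFrom ((optDFA M).step (some q) none) v = none
      have : (optDFA M).step (some q) none = none := rfl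
      rw [this]; exact optDFA_evalFrom_none M v
    | some b =>
      have hv' : none ∈ v := by simpa using hv
      show (optDFA M).evalFrom ((optDFA M).step (some q) (some b)) v = none
      have : (optDFA M).step (some q) (some b) = some (M.step q b) := rfl
      rw [this]; exact ih hv' _

lemma eq_map_some_reduceOption (v : List (Option B)) (h : none ∉ v) :
    v = v.reduceOption.map some := by
  induction v with
  | nil => rfl
  | cons x v ih =>
    match x with
    | none => exact absurd List.mem_cons_self h
    | some b =>
      have h' : none ∉ v := fun hc => h (List.mem_cons_of_mem _ hc)
      rw [List.reduceOption_cons_of_some]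
      simpa using ih h'

lemma regular_map_some {L : Language B} (h : RegularLang L) :
    RegularLang {v : List (Option B) | ∃ u ∈ L, v = u.map some} := by
  classical
  obtain ⟨Q, _, M, rfl⟩ := h
  refine ⟨Option Q, inferInstance, optDFA M, ?_⟩
  ext v
  rw [DFA.mem_accepts, DFA.eval]
  have hstart : (optDFA M).start = some M.start := rfl
  rw [hstart]
  by_cases hn : none ∈ v
  · rw [optDFA_evalFrom_mem_none M v hn]
    refine iff_of_false ?_ ?_
    · intro hc
      obtain ⟨q, _, hq⟩ := hc
      exact Option.some_ne_none q hq
    · rintro ⟨u, _, rfl⟩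
      simp at hn
  · rw [eq_map_some_reduceOption v hn, optDFA_evalFrom_map]
    constructor
    · intro hc
      obtain ⟨q, hq, hq'⟩ := hc
      have hqe : q = M.evalFrom M.start v.reduceOption := Option.some_injective Q hq'
      have h2 : M.evalFrom M.start v.reduceOption ∈ M.accept := hqe ▸ hq
      exact ⟨v.reduceOption, (DFA.mem_accepts M).mpr h2, rfl⟩
    · rintro ⟨u, hu, hu'⟩
      have heq : u = v.reduceOption :=
        List.map_injective_iff.mpr (Option.some_injective B) hu'.symm
      subst heq
      exact ⟨_, (DFA.mem_accepts M).mp hu, rfl⟩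


variable {A B M : Type} [Monoid M]

lemma foldl_mul (φ : A → M) (w : List A) : ∀ x : M,
    w.foldl (fun s b => s * φ b) x = x * monProd φ w := by
  induction w with
  | nil => intro x; simp [monProd]
  | cons a w ih => intro x; simp [monProd, List.foldl_cons, ih, mul_assoc]

lemma prodPlus_eq_some (φ : A → M) {w : List A} (h : w ≠ []) :
    prodPlus φ w = some (monProd φ w) := by
  match w with
  | [] => exact absurd rfl h
  | a :: w => simp [prodPlus, foldl_mul, monProd]

lemma ne_nil_of_prodPlus {φ : A → M} {w : List A} {m : M}
    (h : prodPlus φ w = some m) : w ≠ [] := by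
  rintro rfl; simp [prodPlus] at h

lemma monProd_nil (φ : A → M) : monProd φ ([] : List A) = 1 := by simp [monProd]

lemma part1 (φ : A → M)
    (hgen : ∀ m : M, ∃ w : List A, prodPlus φ w = some m)
    (L : Language A) (hL : IsRobustMonMarkovLang φ L) :
    ∃ K : Language A, IsRobustSgMarkovLang φ K := by
  classical
  obtain ⟨e, ⟨heL, he1⟩, huniq1⟩ := hL.unique_rep 1
  have helen : e.length ≤ 0 :=
    hL.min_length e heL [] (by rw [monProd_nil, he1])
  have he : e = [] := List.eq_nil_of_length_eq_zero (Nat.le_zero.mp helen)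
  subst he
  -- minimal nonempty length representing 1
  have hex : ∃ n, ∃ v : List A, v ≠ [] ∧ v.length = n ∧ monProd φ v = 1 := by
    obtain ⟨v, hv⟩ := hgen 1
    have hvne := ne_nil_of_prodPlus hv
    rw [prodPlus_eq_some φ hvne] at hv
    exact ⟨v.length, v, hvne, rfl, (Option.some_injective _ hv)⟩
  set n := Nat.find hex with hn
  obtain ⟨v, hvne, hvlen, hv1⟩ := Nat.find_spec hex
  have hmin1 : ∀ y : List A, y ≠ [] → monProd φ y = 1 → n ≤ y.length :=
    fun y hy h1 => Nat.find_min' hex ⟨y, hy, rfl, h1⟩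
  set u := v.dropLast with hu
  set a := v.getLast hvne with ha
  have hvd : u ++ [a] = v := List.dropLast_append_getLast hvne
  obtain ⟨u', ⟨hu'L, hu'⟩, _⟩ := hL.unique_rep (monProd φ u)
  have hu'len : u'.length ≤ u.length := hL.min_length u' hu'L u hu'.symm
  set w₀ := u' ++ [a] with hw₀
  have hmon_app : ∀ x : List A, monProd φ (x ++ [a]) = monProd φ x * φ a := by
    intro x; simp [monProd]
  have hw₀1 : monProd φ w₀ = 1 := by
    rw [hw₀, hmon_app, hu', ← hmon_app, hvd, hv1]
  have hw₀ne : w₀ ≠ [] := by simp [hw₀]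
  have hw₀len : w₀.length = n := by
    have h1 : w₀.length = u'.length + 1 := by simp [hw₀]
    have h2 : v.length = u.length + 1 := by rw [← hvd]; simp
    have hge : n ≤ w₀.length := hmin1 w₀ hw₀ne hw₀1
    omega
  refine ⟨{x | (x ∈ L ∧ x ≠ []) ∨ x = w₀}, ⟨?_, ?_, ?_, ?_⟩, ?_⟩
  · -- regular
    have h1 := regular_combo (fun p q => p ∧ q) hL.regular (regular_ne_nil (A := A))
    have h2 := regular_combo (fun p q => p ∨ q) h1 (regular_singleton w₀)
    exact h2
  · -- [] ∉ K
    rintro (⟨-, h⟩ | h)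
    · exact h rfl
    · exact hw₀ne h.symm
  · -- plus prefix closed
    rintro x y hx hy (⟨hxyL, -⟩ | heq)
    · exact Or.inl ⟨hL.prefix_closed x y hxyL, hx⟩
    · have hyd : y.dropLast ++ [y.getLast hy] = y := List.dropLast_append_getLast hy
      have heq2 : (x ++ y.dropLast) ++ [y.getLast hy] = u' ++ [a] := by
        rw [List.append_assoc, hyd]; exact heq
      have h2 := List.append_inj' heq2 (by simp)
      exact Or.inl ⟨hL.prefix_closed x y.dropLast (h2.1.symm ▸ hu'L), hx⟩
  · -- unique rep
    intro s
    by_cases hs : s = 1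
    · subst hs
      refine ⟨w₀, ⟨Or.inr rfl, by rw [prodPlus_eq_some φ hw₀ne, hw₀1]⟩, ?_⟩
      rintro y ⟨hyK, hyP⟩
      have hyne := ne_nil_of_prodPlus hyP
      rw [prodPlus_eq_some φ hyne] at hyP
      have hy1 : monProd φ y = 1 := Option.some_injective _ hyP
      rcases hyK with ⟨hyL, -⟩ | h
      · exact absurd (huniq1 y ⟨hyL, hy1⟩) hyne
      · exact h
    · obtain ⟨z, ⟨hzL, hz⟩, hzu⟩ := hL.unique_rep s
      have hzne : z ≠ [] := by
        rintro rfl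
        exact hs ((monProd_nil φ) ▸ hz).symm
      refine ⟨z, ⟨Or.inl ⟨hzL, hzne⟩, by rw [prodPlus_eq_some φ hzne, hz]⟩, ?_⟩
      rintro y ⟨hyK, hyP⟩
      have hyne := ne_nil_of_prodPlus hyP
      rw [prodPlus_eq_some φ hyne] at hyP
      have hys : monProd φ y = s := Option.some_injective _ hyP
      rcases hyK with ⟨hyL, -⟩ | rfl
      · exact hzu y ⟨hyL, hys⟩
      · exact absurd (by rw [← hys, hw₀1]) hs
  · -- min length
    intro x hxK y hP
    have hxne : x ≠ [] := by
      rcases hxK with ⟨-, h⟩ | rfl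
      · exact h
      · exact hw₀ne
    rw [prodPlus_eq_some φ hxne] at hP
    have hyne := ne_nil_of_prodPlus hP
    rw [prodPlus_eq_some φ hyne] at hP
    have hyx : monProd φ y = monProd φ x := Option.some_injective _ hP
    rcases hxK with ⟨hxL, -⟩ | rfl
    · exact hL.min_length x hxL y hyx
    · have h1 : monProd φ y = 1 := by rw [hyx, hw₀1]
      have := hmin1 y hyne h1
      omega

lemma monProd_map_some (φ : B → M) (u : List B) :
    monProd (fun x : Option B => Option.elim x 1 φ) (u.map some) = monProd φ u := by
  simp only [monProd, List.map_map]
  rfl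

lemma monProd_reduceOption (φ : B → M) (v : List (Option B)) :
    monProd (fun x : Option B => Option.elim x 1 φ) v = monProd φ v.reduceOption := by
  induction v with
  | nil => rfl
  | cons x v ih =>
    match x with
    | none =>
      rw [List.reduceOption_cons_of_none]
      simpa [monProd] using ih
    | some b =>
      rw [List.reduceOption_cons_of_some]
      simp only [monProd, List.map_cons, List.prod_cons] at ih ⊢
      rw [ih]
      rfl

lemma part2 (φ : B → M) (hsurj : Surjective (monProd φ))
    (L : Language B) (hL : IsRobustMonMarkovLang φ L) :
    ∃ K : Language (Option B),
      IsRobustSgMarkovLang (fun x : Option B => Option.elim x 1 φ) K := by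
  classical
  set φ' : Option B → M := fun x => Option.elim x 1 φ with hφ'
  have hgen' : ∀ m : M, ∃ w : List (Option B), prodPlus φ' w = some m := by
    intro m
    obtain ⟨u, hu⟩ := hsurj m
    refine ⟨none :: u.map some, ?_⟩
    rw [prodPlus_eq_some φ' (by simp)]
    congr 1
    have : monProd φ' (none :: u.map some) = φ' none * monProd φ' (u.map some) := by
      simp [monProd]
    rw [this, monProd_map_some]
    show (1 : M) * monProd φ u = m
    rw [one_mul]; exact hu
  refine part1 φ' hgen' {v | ∃ u ∈ L, v = u.map some} ⟨⟨?_, ?_, ?_⟩, ?_⟩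
  · exact regular_map_some hL.regular
  · rintro x y ⟨l, hlL, hmap⟩
    have hx : x = (l.take x.length).map some := by
      have h1 : (x ++ y).take x.length = x := List.take_left
      rw [hmap] at h1
      conv_lhs => rw [← h1]
      rw [List.map_take]
    refine ⟨l.take x.length, ?_, hx⟩
    exact hL.prefix_closed _ (l.drop x.length) (by rw [List.take_append_drop]; exact hlL)
  · intro m
    obtain ⟨z, ⟨hzL, hz⟩, hzu⟩ := hL.unique_rep m
    refine ⟨z.map some, ⟨⟨z, hzL, rfl⟩, by rw [monProd_map_some]; exact hz⟩, ?_⟩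
    rintro y ⟨⟨l, hlL, rfl⟩, hyP⟩
    rw [monProd_map_some] at hyP
    rw [hzu l ⟨hlL, hyP⟩]
  · rintro x ⟨l, hlL, rfl⟩ y hyx
    rw [monProd_map_some] at hyx
    rw [monProd_reduceOption] at hyx
    have h1 := hL.min_length l hlL y.reduceOption hyx
    have h2 := List.reduceOption_length_le y
    simpa using le_trans h1 h2

end Stmt3Aux


/-- (i) A robust monoid Markov language over an alphabet representing a semigroup
generating set yields a robust semigroup Markov language over the same alphabet.
(ii) A robust monoid Markov language over an alphabet `B` representing a monoid
generating set yields a robust semigroup Markov language over `B` with one new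
letter representing the identity. -/
theorem stmt3 {M : Type} [Monoid M] :
    (∀ (A : Type) [Fintype A] (φ : A → M),
      (∀ m : M, ∃ w : List A, prodPlus φ w = some m) →
      (∃ L : Language A, IsRobustMonMarkovLang φ L) →
      ∃ K : Language A, IsRobustSgMarkovLang φ K) ∧
    (∀ (B : Type) [Fintype B] (φ : B → M),
      Surjective (monProd φ) →
      (∃ L : Language B, IsRobustMonMarkovLang φ L) →
      ∃ K : Language (Option B),
        IsRobustSgMarkovLang (fun x : Option B => Option.elim x 1 φ) K) := by
  constructor
  · intro A _ φ hgen ⟨L, hL⟩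
    exact Stmt3Aux.part1 φ hgen L hL
  · intro B _ φ hsurj ⟨L, hL⟩
    exact Stmt3Aux.part2 φ hsurj L hL
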